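/- arXiv:2604.02505 — 2 statements merged into one kernel-verified Lean document; each statement's English description precedes it below -/
import Mathlib

section
/- Let A and B be positive definite symmetric n×n matrices with A ⪯ B. Then tr((B^{-1/2} − A^{-1/2}) B^{1/2} (B^{-1/2} − A^{-1/2}) A) ≤ tr(B^{1/2}) − tr(A^{1/2}). -/
open Matrix
open scoped Classical

/-- The positive semidefinite square root of a matrix (zero if not PSD). -/
noncomputable def sqrtM {n : ℕ} (A : Matrix (Fin n) (Fin n) ℝ) : Matrix (Fin n) (Fin n) ℝ :=
  if h : A.PosSemidef then
    (h.1.eigenvectorUnitary : Matrix (Fin n) (Fin n) ℝ) *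
      diagonal ((↑) ∘ (√·) ∘ h.1.eigenvalues) *
      (star h.1.eigenvectorUnitary : Matrix (Fin n) (Fin n) ℝ)
  else 0

/-- Euclidean norm of a vector. -/
noncomputable def euclNorm {n : ℕ} (v : Fin n → ℝ) : ℝ := Real.sqrt (v ⬝ᵥ v)

/-- The ℓ₂ operator (spectral) norm of a matrix. -/
noncomputable def opNorm {n : ℕ} (A : Matrix (Fin n) (Fin n) ℝ) : ℝ :=
  ⨆ u : {u : Fin n → ℝ // euclNorm u ≤ 1}, euclNorm (A *ᵥ u)

/-- The square root of a PSD matrix (as in the old Mathlib). -/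
noncomputable def Matrix.PosSemidef.sqrt {n : ℕ} {A : Matrix (Fin n) (Fin n) ℝ}
    (h : A.PosSemidef) : Matrix (Fin n) (Fin n) ℝ :=
  (h.1.eigenvectorUnitary : Matrix (Fin n) (Fin n) ℝ) *
    diagonal ((↑) ∘ (√·) ∘ h.1.eigenvalues) *
    (star h.1.eigenvectorUnitary : Matrix (Fin n) (Fin n) ℝ)

lemma Matrix.PosSemidef.posSemidef_sqrt {n : ℕ} {A : Matrix (Fin n) (Fin n) ℝ}
    (h : A.PosSemidef) : h.sqrt.PosSemidef := by
  unfold Matrix.PosSemidef.sqrt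
  rw [Unitary.isUnit_coe.posSemidef_star_right_conjugate_iff]
  refine Matrix.PosSemidef.diagonal fun i => ?_
  simp [Real.sqrt_nonneg]

lemma Matrix.PosSemidef.sqrt_mul_self {n : ℕ} {A : Matrix (Fin n) (Fin n) ℝ}
    (h : A.PosSemidef) : h.sqrt * h.sqrt = A := by
  unfold Matrix.PosSemidef.sqrt
  conv_rhs => rw [h.1.spectral_theorem, Unitary.conjStarAlgAut_apply]
  have hU : (star h.1.eigenvectorUnitary : Matrix (Fin n) (Fin n) ℝ) *
      (h.1.eigenvectorUnitary : Matrix (Fin n) (Fin n) ℝ) = 1 := Unitary.coe_star_mul_self _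
  simp only [Matrix.mul_assoc]
  rw [← Matrix.mul_assoc _ (h.1.eigenvectorUnitary : Matrix (Fin n) (Fin n) ℝ), hU,
    Matrix.one_mul, ← Matrix.mul_assoc (diagonal _), diagonal_mul_diagonal]
  congr 3
  funext i
  simp [Real.mul_self_sqrt (h.eigenvalues_nonneg i)]

section aux
set_option maxHeartbeats 1000000

-- L4: trace of product of PSDs is nonneg
lemma trace_nonneg_of_posSemidef {n : ℕ} {M : Matrix (Fin n) (Fin n) ℝ}
    (hM : M.PosSemidef) : 0 ≤ M.trace := by
  rw [Matrix.trace]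
  apply Finset.sum_nonneg
  intro i _
  have := hM.dotProduct_mulVec_nonneg (Pi.single i 1)
  simpa [Matrix.diag, dotProduct, mulVec, Pi.single_apply] using this

lemma trace_mul_nonneg {n : ℕ} {M P : Matrix (Fin n) (Fin n) ℝ}
    (hM : M.PosSemidef) (hP : P.PosSemidef) : 0 ≤ (M * P).trace := by
  open scoped MatrixOrder in obtain ⟨C, rfl⟩ := CStarAlgebra.nonneg_iff_eq_star_mul_self.mp hM.nonneg
  rw [Matrix.mul_assoc, Matrix.trace_mul_comm]
  exact trace_nonneg_of_posSemidef (hP.mul_mul_conjTranspose_same C)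

lemma sub_psd_of_sq_sub_psd {n : ℕ} {S T : Matrix (Fin n) (Fin n) ℝ}
    (hS : S.PosSemidef) (hT : T.PosSemidef) (h : (T * T - S * S).PosSemidef) :
    (T - S).PosSemidef := by
  classical
  have hM : (T - S).IsHermitian := hT.1.sub hS.1
  apply hM.posSemidef_iff_eigenvalues_nonneg.mpr
  intro i
  show (0 : ℝ) ≤ hM.eigenvalues i
  by_contra hneg
  push_neg at hneg
  set μ : ℝ := hM.eigenvalues i with hμ
  set v : Fin n → ℝ := ⇑(hM.eigenvectorBasis i) with hv
  have hv0 : v ≠ 0 := by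
    intro h0
    have h1 : ‖hM.eigenvectorBasis i‖ = 1 := hM.eigenvectorBasis.orthonormal.1 i
    rw [show (hM.eigenvectorBasis i : EuclideanSpace ℝ (Fin n)) = 0 from PiLp.ext fun j => congrFun h0 j] at h1
    simp at h1
  have heig : (T - S) *ᵥ v = μ • v := hM.mulVec_eigenvectorBasis i
  -- quadratic forms
  have hq : 0 ≤ v ⬝ᵥ (T * T - S * S) *ᵥ v := by simpa using h.dotProduct_mulVec_nonneg v
  have key : v ⬝ᵥ (T * T - S * S) *ᵥ v = μ * (v ⬝ᵥ T *ᵥ v + v ⬝ᵥ S *ᵥ v) := by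
    have hid : T * T - S * S = T * (T - S) + (T - S) * S := by noncomm_ring
    have h1 : v ⬝ᵥ (T * (T - S)) *ᵥ v = μ * (v ⬝ᵥ T *ᵥ v) := by
      rw [← Matrix.mulVec_mulVec, heig, Matrix.mulVec_smul, dotProduct_smul, smul_eq_mul]
    have h2 : v ⬝ᵥ ((T - S) * S) *ᵥ v = μ * (v ⬝ᵥ S *ᵥ v) := by
      rw [← Matrix.mulVec_mulVec, Matrix.dotProduct_mulVec]
      have : v ᵥ* (T - S) = μ • v := by
        calc v ᵥ* (T - S) = (T - S)ᵀ *ᵥ v := by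
              rw [← Matrix.mulVec_transpose]
        _ = (T - S) *ᵥ v := by rw [show (T - S)ᵀ = (T - S) from hM]
        _ = μ • v := heig
      rw [this, smul_dotProduct, smul_eq_mul]
    rw [hid, Matrix.add_mulVec, dotProduct_add, h1, h2]
    ring
  have hqT : 0 ≤ v ⬝ᵥ T *ᵥ v := by simpa using hT.dotProduct_mulVec_nonneg v
  have hqS : 0 ≤ v ⬝ᵥ S *ᵥ v := by simpa using hS.dotProduct_mulVec_nonneg v
  have hsum : v ⬝ᵥ T *ᵥ v + v ⬝ᵥ S *ᵥ v = 0 := by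
    rcases lt_or_eq_of_le (add_nonneg hqT hqS) with hlt | heq
    · exfalso
      have : μ * (v ⬝ᵥ T *ᵥ v + v ⬝ᵥ S *ᵥ v) < 0 := mul_neg_of_neg_of_pos hneg hlt
      rw [key] at hq; linarith
    · exact heq.symm
  have hT0 : v ⬝ᵥ T *ᵥ v = 0 := by linarith
  have hS0 : v ⬝ᵥ S *ᵥ v = 0 := by linarith
  have hTv : T *ᵥ v = 0 := (hT.dotProduct_mulVec_zero_iff v).mp (by simpa using hT0)
  have hSv : S *ᵥ v = 0 := (hS.dotProduct_mulVec_zero_iff v).mp (by simpa using hS0)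
  have : μ • v = 0 := by rw [← heig, Matrix.sub_mulVec, hTv, hSv, sub_zero]
  have := smul_eq_zero.mp this
  rcases this with h0 | h0
  · exact absurd h0 (ne_of_lt hneg)
  · exact hv0 h0

section helpers
variable {n : ℕ}

lemma sqrt_facts {Y : Matrix (Fin n) (Fin n) ℝ} (hY : Y.PosDef) :
    hY.inv.posSemidef.sqrt * hY.inv.posSemidef.sqrt = Y⁻¹ ∧
    IsUnit (hY.inv.posSemidef.sqrt).det ∧
    hY.inv.posSemidef.sqrt * Y * hY.inv.posSemidef.sqrt = 1 := by
  classical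
  set R := hY.inv.posSemidef.sqrt with hRdef
  have hRR : R * R = Y⁻¹ := hY.inv.posSemidef.sqrt_mul_self
  have hYdet : IsUnit Y.det := isUnit_iff_ne_zero.mpr hY.det_pos.ne'
  have hdet : IsUnit R.det := by
    have := congrArg Matrix.det hRR
    rw [Matrix.det_mul] at this
    refine isUnit_iff_ne_zero.mpr fun h0 => ?_
    rw [h0, mul_zero] at this
    exact hY.inv.det_pos.ne (by rw [← this])
  have hcomm : R * Y = Y * R := by
    have h1 : Y⁻¹ * R = R * Y⁻¹ := by rw [← hRR]; noncomm_ring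
    calc R * Y = Y * Y⁻¹ * R * Y := by rw [Matrix.mul_nonsing_inv _ hYdet, Matrix.one_mul]
      _ = Y * (Y⁻¹ * R) * Y := by rw [Matrix.mul_assoc Y Y⁻¹ R]
      _ = Y * (R * Y⁻¹) * Y := by rw [h1]
      _ = Y * R * (Y⁻¹ * Y) := by noncomm_ring
      _ = Y * R := by rw [Matrix.nonsing_inv_mul _ hYdet, Matrix.mul_one]
  refine ⟨hRR, hdet, ?_⟩
  calc R * Y * R = Y * R * R := by rw [hcomm]
    _ = Y * Y⁻¹ := by rw [Matrix.mul_assoc, hRR]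
    _ = 1 := Matrix.mul_nonsing_inv _ hYdet

lemma posDef_conj {X R : Matrix (Fin n) (Fin n) ℝ} (hX : X.PosDef)
    (hR : R.IsHermitian) (hdet : IsUnit R.det) : (R * X * R).PosDef := by
  refine Matrix.PosDef.of_dotProduct_mulVec_pos ?_ ?_
  · have : (R * X * R)ᴴ = Rᴴ * Xᴴ * Rᴴ := by
      rw [Matrix.conjTranspose_mul, Matrix.conjTranspose_mul]; noncomm_ring
    rw [Matrix.IsHermitian, this, hR, hX.1]
  · intro x hx
    have hRx : R *ᵥ x ≠ 0 := by
      intro h0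
      apply hx
      have : R⁻¹ *ᵥ (R *ᵥ x) = x := by
        rw [Matrix.mulVec_mulVec, Matrix.nonsing_inv_mul _ hdet, Matrix.one_mulVec]
      rw [← this, h0, Matrix.mulVec_zero]
    have key : star x ⬝ᵥ (R * X * R) *ᵥ x = star (R *ᵥ x) ⬝ᵥ X *ᵥ (R *ᵥ x) := by
      simp only [star_trivial]
      rw [Matrix.mul_assoc, ← Matrix.mulVec_mulVec, Matrix.dotProduct_mulVec,
        ← Matrix.mulVec_transpose, show Rᵀ = R from hR, ← Matrix.mulVec_mulVec]
    rw [key]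
    exact hX.dotProduct_mulVec_pos hRx

/-- If `C` is positive definite and `1 - C` is PSD then `C⁻¹ - 1` is PSD. -/
lemma inv_sub_one_psd {C : Matrix (Fin n) (Fin n) ℝ} (hC : C.PosDef)
    (h : (1 - C).PosSemidef) : (C⁻¹ - 1).PosSemidef := by
  obtain ⟨hQQ, hQdet, hQCQ⟩ := sqrt_facts hC
  set Q := hC.inv.posSemidef.sqrt
  have hQH : Q.IsHermitian := hC.inv.posSemidef.posSemidef_sqrt.1
  have := h.mul_mul_conjTranspose_same Q
  rw [hQH.eq] at this
  have heq : Q * (1 - C) * Q = C⁻¹ - 1 := by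
    rw [Matrix.mul_sub, Matrix.mul_one, Matrix.sub_mul, hQQ, hQCQ]
  rwa [heq] at this

/-- Inverse is antitone on positive definite matrices. -/
lemma inv_sub_inv_psd {X Y : Matrix (Fin n) (Fin n) ℝ} (hX : X.PosDef) (hY : Y.PosDef)
    (h : (Y - X).PosSemidef) : (X⁻¹ - Y⁻¹).PosSemidef := by
  obtain ⟨hRR, hRdet, hRYR⟩ := sqrt_facts hY
  set R := hY.inv.posSemidef.sqrt with hRdef
  have hRH : R.IsHermitian := hY.inv.posSemidef.posSemidef_sqrt.1
  have hC : (R * X * R).PosDef := posDef_conj hX hRH hRdet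
  have h1C : (1 - R * X * R).PosSemidef := by
    have := h.mul_mul_conjTranspose_same R
    rw [hRH.eq] at this
    have heq : R * (Y - X) * R = 1 - R * X * R := by
      rw [Matrix.mul_sub, Matrix.sub_mul, hRYR]
    rwa [heq] at this
  have hCinv : ((R * X * R)⁻¹ - 1).PosSemidef := inv_sub_one_psd hC h1C
  have := hCinv.mul_mul_conjTranspose_same R
  rw [hRH.eq] at this
  have heq : R * ((R * X * R)⁻¹ - 1) * R = X⁻¹ - Y⁻¹ := by
    have hXdet : IsUnit X.det := isUnit_iff_ne_zero.mpr hX.det_pos.ne'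
    have hinv : (R * X * R)⁻¹ = R⁻¹ * X⁻¹ * R⁻¹ := by
      rw [Matrix.mul_inv_rev, Matrix.mul_inv_rev]; noncomm_ring
    rw [Matrix.mul_sub, Matrix.sub_mul, Matrix.mul_one, hRR, hinv]
    congr 1
    calc R * (R⁻¹ * X⁻¹ * R⁻¹) * R
        = (R * R⁻¹) * X⁻¹ * (R⁻¹ * R) := by noncomm_ring
      _ = X⁻¹ := by
          rw [Matrix.mul_nonsing_inv _ hRdet, Matrix.nonsing_inv_mul _ hRdet,
            Matrix.one_mul, Matrix.mul_one]
  rwa [heq] at this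

end helpers

section mainproof
variable {n : ℕ}

lemma posDef_of_posSemidef_isUnit_det {S : Matrix (Fin n) (Fin n) ℝ}
    (h : S.PosSemidef) (hdet : IsUnit S.det) : S.PosDef := by
  refine Matrix.PosDef.of_dotProduct_mulVec_pos h.1 fun x hx => ?_
  rcases lt_or_eq_of_le (h.dotProduct_mulVec_nonneg x) with hlt | heq
  · exact hlt
  · exfalso
    have hSx : S *ᵥ x = 0 := (h.dotProduct_mulVec_zero_iff x).mp heq.symm
    apply hx
    have : S⁻¹ *ᵥ (S *ᵥ x) = x := by
      rw [Matrix.mulVec_mulVec, Matrix.nonsing_inv_mul _ hdet, Matrix.one_mulVec]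
    rw [← this, hSx, Matrix.mulVec_zero]

lemma sqrt_isUnit_det {Y : Matrix (Fin n) (Fin n) ℝ} (hY : Y.PosDef) :
    IsUnit (hY.posSemidef.sqrt).det := by
  have hRR : hY.posSemidef.sqrt * hY.posSemidef.sqrt = Y := hY.posSemidef.sqrt_mul_self
  have := congrArg Matrix.det hRR
  rw [Matrix.det_mul] at this
  refine isUnit_iff_ne_zero.mpr fun h0 => ?_
  rw [h0, mul_zero] at this
  exact hY.det_pos.ne (by rw [← this])

theorem core_trace_inequality' {A B : Matrix (Fin n) (Fin n) ℝ}
    (hA : A.PosDef) (hB : B.PosDef) (hAB : (B - A).PosSemidef) :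
    ((((sqrtM B)⁻¹ - (sqrtM A)⁻¹) * sqrtM B * ((sqrtM B)⁻¹ - (sqrtM A)⁻¹)) * A).trace
      ≤ (sqrtM B).trace - (sqrtM A).trace := by
  classical
  have hSB : sqrtM B = hB.posSemidef.sqrt := dif_pos hB.posSemidef
  have hSA : sqrtM A = hA.posSemidef.sqrt := dif_pos hA.posSemidef
  set S : Matrix (Fin n) (Fin n) ℝ := hB.posSemidef.sqrt with hSdef
  set T : Matrix (Fin n) (Fin n) ℝ := hA.posSemidef.sqrt with hTdef
  rw [hSB, hSA]
  have hS2 : S * S = B := hB.posSemidef.sqrt_mul_self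
  have hT2 : T * T = A := hA.posSemidef.sqrt_mul_self
  have hSpsd : S.PosSemidef := hB.posSemidef.posSemidef_sqrt
  have hTpsd : T.PosSemidef := hA.posSemidef.posSemidef_sqrt
  have hSdet : IsUnit S.det := sqrt_isUnit_det hB
  have hTdet : IsUnit T.det := sqrt_isUnit_det hA
  have hSpos : S.PosDef := posDef_of_posSemidef_isUnit_det hSpsd hSdet
  have hTpos : T.PosDef := posDef_of_posSemidef_isUnit_det hTpsd hTdet
  -- Löwner–Heinz: T ≤ S
  have hST : (S - T).PosSemidef := by
    apply sub_psd_of_sq_sub_psd hTpsd hSpsd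
    rw [hS2, hT2]; exact hAB
  -- inverse antitone: S⁻¹ ≤ T⁻¹
  have hinv : (T⁻¹ - S⁻¹).PosSemidef := inv_sub_inv_psd hTpos hSpos hST
  -- trace inequality
  have htr : 0 ≤ ((T⁻¹ - S⁻¹) * A).trace := trace_mul_nonneg hinv hA.posSemidef
  -- cancellation rewrites
  have c1 : ∀ X, S⁻¹ * (S * X) = X := fun X => Matrix.nonsing_inv_mul_cancel_left S X hSdet
  have c2 : ∀ X, S * (S⁻¹ * X) = X := fun X => Matrix.mul_nonsing_inv_cancel_left S X hSdet
  have c3 : ∀ X, T⁻¹ * (T * X) = X := fun X => Matrix.nonsing_inv_mul_cancel_left T X hTdet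
  have key : ((S⁻¹ - T⁻¹) * S * (S⁻¹ - T⁻¹)) * A
      = S⁻¹ * A - T - (T - T⁻¹ * (S * T)) := by
    rw [← hT2]
    simp only [Matrix.sub_mul, Matrix.mul_sub, Matrix.mul_assoc, c1, c2, c3]
  rw [key]
  have t1 : (T⁻¹ * (S * T)).trace = S.trace := by
    rw [Matrix.trace_mul_comm, Matrix.mul_assoc, Matrix.mul_nonsing_inv _ hTdet,
      Matrix.mul_one]
  have t2 : (T⁻¹ * A).trace = T.trace := by rw [← hT2, c3]
  have t3 : ((T⁻¹ - S⁻¹) * A).trace = T.trace - (S⁻¹ * A).trace := by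
    rw [Matrix.sub_mul, Matrix.trace_sub, t2]
  rw [t3] at htr
  simp only [Matrix.trace_sub]
  rw [t1]
  linarith

end mainproof

end aux

set_option maxHeartbeats 1000000 in
theorem core_trace_inequality {n : ℕ} {A B : Matrix (Fin n) (Fin n) ℝ}
    (hA : A.PosDef) (hB : B.PosDef) (hAB : (B - A).PosSemidef) :
    ((((sqrtM B)⁻¹ - (sqrtM A)⁻¹) * sqrtM B * ((sqrtM B)⁻¹ - (sqrtM A)⁻¹)) * A).trace
      ≤ (sqrtM B).trace - (sqrtM A).trace := core_trace_inequality' hA hB hAB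
end

section
/- Smoothness of the dual regularizer: let S be a positive definite symmetric n×n matrix, η > 0, and Ψ*(m) = η tr(√(mm^T + S)). Then for all m, m' ∈ ℝ^n, the Bregman divergence satisfies B_{Ψ*}(m; m') := Ψ*(m) − Ψ*(m') − ⟨∇Ψ*(m'), m − m'⟩ ≤ (η/2) ‖m − m'‖²_{S^{-1/2}}, where ‖x‖²_H = ⟨x, Hx⟩ and ∇Ψ*(m) = η (mm^T + S)^{-1/2} m. -/
open Matrix
open scoped Classical

namespace LeonAux

variable {n : ℕ}

lemma herm_transpose {A : Matrix (Fin n) (Fin n) ℝ} (h : A.IsHermitian) : Aᵀ = A := by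
  simpa [Matrix.conjTranspose_eq_transpose_of_trivial] using h.eq

lemma dot_sym {A : Matrix (Fin n) (Fin n) ℝ} (hA : Aᵀ = A) (u v : Fin n → ℝ) :
    u ⬝ᵥ (A *ᵥ v) = (A *ᵥ u) ⬝ᵥ v := by
  rw [Matrix.dotProduct_mulVec, ← Matrix.mulVec_transpose, hA]

lemma dot_self_nonneg (v : Fin n → ℝ) : 0 ≤ v ⬝ᵥ v :=
  Finset.sum_nonneg fun i _ => mul_self_nonneg _

lemma trace_mul_transpose_nonneg (M : Matrix (Fin n) (Fin n) ℝ) : 0 ≤ (M * Mᵀ).trace := by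
  rw [Matrix.trace]
  refine Finset.sum_nonneg fun i _ => ?_
  rw [Matrix.diag_apply, Matrix.mul_apply]
  exact Finset.sum_nonneg fun j _ => by
    simp only [Matrix.transpose_apply]; exact mul_self_nonneg _

lemma vecMulVec_mulVec (v w u : Fin n → ℝ) : vecMulVec v w *ᵥ u = (w ⬝ᵥ u) • v := by
  ext i
  simp only [Matrix.mulVec, Matrix.vecMulVec_apply, dotProduct, Pi.smul_apply,
    smul_eq_mul]
  rw [Finset.sum_mul]
  exact Finset.sum_congr rfl fun j _ => by ring

lemma dot_vecMulVec (v u : Fin n → ℝ) : u ⬝ᵥ (vecMulVec v v *ᵥ u) = (v ⬝ᵥ u) ^ 2 := by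
  rw [vecMulVec_mulVec, dotProduct_smul]
  rw [show u ⬝ᵥ v = v ⬝ᵥ u from dotProduct_comm u v, smul_eq_mul, sq]

lemma posSemidef_vecMulVec (v : Fin n → ℝ) : (vecMulVec v v).PosSemidef := by
  refine Matrix.PosSemidef.of_dotProduct_mulVec_nonneg ?_ ?_
  · ext i j
    simp [Matrix.conjTranspose_apply, Matrix.vecMulVec_apply, mul_comm]
  · intro x
    simp only [star_trivial]
    rw [dot_vecMulVec]
    exact sq_nonneg _

lemma posDef_sqrt {P : Matrix (Fin n) (Fin n) ℝ} (hP : P.PosDef) :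
    (hP.posSemidef.sqrt).PosDef := by
  have hC : (hP.posSemidef.sqrt).PosSemidef := hP.posSemidef.posSemidef_sqrt
  set C := hP.posSemidef.sqrt with hCdef
  have hCC : C * C = P := hP.posSemidef.sqrt_mul_self
  refine Matrix.PosDef.of_dotProduct_mulVec_pos hC.1 fun x hx => ?_
  simp only [star_trivial]
  have hCx : C *ᵥ x ≠ 0 := by
    intro h0
    have h1 := hP.dotProduct_mulVec_pos hx
    rw [← hCC, ← Matrix.mulVec_mulVec, h0] at h1
    simp at h1
  set D := hC.sqrt with hDdef
  have hDD : D * D = C := hC.sqrt_mul_self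
  have hDsym : Dᵀ = D := herm_transpose hC.posSemidef_sqrt.1
  have hq : x ⬝ᵥ (C *ᵥ x) = (D *ᵥ x) ⬝ᵥ (D *ᵥ x) := by
    rw [← hDD, ← Matrix.mulVec_mulVec, dot_sym hDsym]
  rcases eq_or_lt_of_le (dot_self_nonneg (D *ᵥ x)) with h | h
  · exfalso
    apply hCx
    have hDx : D *ᵥ x = 0 := by
      rwa [eq_comm, dotProduct_self_eq_zero] at h
    rw [← hDD, ← Matrix.mulVec_mulVec, hDx, Matrix.mulVec_zero]
  · rwa [hq]

lemma amgm {A Q : Matrix (Fin n) (Fin n) ℝ} (hA : A.PosDef) (hQ : Q.PosDef) :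
    2 * (hA.posSemidef.sqrt).trace ≤ (A * Q⁻¹).trace + Q.trace := by
  set R := hA.posSemidef.sqrt with hRdef
  set C := hQ.posSemidef.sqrt with hCdef
  have hRR : R * R = A := hA.posSemidef.sqrt_mul_self
  have hCC : C * C = Q := hQ.posSemidef.sqrt_mul_self
  have hCpd : C.PosDef := posDef_sqrt hQ
  have hCdet : IsUnit C.det := isUnit_iff_ne_zero.mpr hCpd.det_pos.ne'
  have hCB : C * C⁻¹ = 1 := Matrix.mul_nonsing_inv _ hCdet
  have hBC : C⁻¹ * C = 1 := Matrix.nonsing_inv_mul _ hCdet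
  have hRsym : Rᵀ = R := herm_transpose hA.posSemidef.posSemidef_sqrt.1
  have hCsym : Cᵀ = C := herm_transpose hCpd.1
  have hBsym : (C⁻¹)ᵀ = C⁻¹ := by rw [Matrix.transpose_nonsing_inv, hCsym]
  have key : 0 ≤ ((C⁻¹ * R - C) * (C⁻¹ * R - C)ᵀ).trace := trace_mul_transpose_nonneg _
  have expand : (C⁻¹ * R - C) * (C⁻¹ * R - C)ᵀ
      = C⁻¹ * R * R * C⁻¹ - C⁻¹ * R * C - C * (R * C⁻¹) + C * C := by
    rw [Matrix.transpose_sub, Matrix.transpose_mul, hRsym, hBsym, hCsym]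
    noncomm_ring
  rw [expand, Matrix.trace_add, Matrix.trace_sub, Matrix.trace_sub] at key
  have t1 : (C⁻¹ * R * R * C⁻¹).trace = (A * Q⁻¹).trace := by
    have e1 : C⁻¹ * R * R * C⁻¹ = C⁻¹ * (R * R * C⁻¹) := by noncomm_ring
    rw [e1, Matrix.trace_mul_comm]
    have e2 : R * R * C⁻¹ * C⁻¹ = (R * R) * (C⁻¹ * C⁻¹) := by noncomm_ring
    have e3 : C⁻¹ * C⁻¹ = Q⁻¹ := by rw [← hCC, Matrix.mul_inv_rev]
    rw [e2, e3, hRR]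
  have t2 : (C⁻¹ * R * C).trace = R.trace := by
    rw [Matrix.trace_mul_cycle, hCB, Matrix.one_mul]
  have t3 : (C * (R * C⁻¹)).trace = R.trace := by
    rw [Matrix.trace_mul_comm, Matrix.mul_assoc, hBC, Matrix.mul_one]
  have t4 : (C * C).trace = Q.trace := by rw [hCC]
  rw [t1, t2, t3, t4] at key
  linarith

lemma mul_inv_sqrt {A : Matrix (Fin n) (Fin n) ℝ} (hA : A.PosDef) :
    A * (hA.posSemidef.sqrt)⁻¹ = hA.posSemidef.sqrt := by
  set Q := hA.posSemidef.sqrt with hQdef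
  have hQpd : Q.PosDef := posDef_sqrt hA
  have hQdet : IsUnit Q.det := isUnit_iff_ne_zero.mpr hQpd.det_pos.ne'
  have hQQ : Q * Q = A := hA.posSemidef.sqrt_mul_self
  calc A * Q⁻¹ = Q * Q * Q⁻¹ := by rw [hQQ]
    _ = Q * (Q * Q⁻¹) := by rw [Matrix.mul_assoc]
    _ = Q := by rw [Matrix.mul_nonsing_inv _ hQdet, Matrix.mul_one]

lemma trace_vecMulVec_mul (v : Fin n → ℝ) {P : Matrix (Fin n) (Fin n) ℝ} (hP : Pᵀ = P) :
    (vecMulVec v v * P).trace = v ⬝ᵥ (P *ᵥ v) := by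
  have e : vecMulVec v v * P = vecMulVec v (P *ᵥ v) := by
    ext i j
    simp only [Matrix.mul_apply, Matrix.vecMulVec_apply, Matrix.mulVec, dotProduct]
    rw [Finset.mul_sum]
    refine Finset.sum_congr rfl fun k _ => ?_
    rw [show P k j = P j k from
      (congrFun (congrFun hP k) j).symm.trans (Matrix.transpose_apply P k j)]
    ring
  rw [e, Matrix.trace]
  simp [Matrix.diag, Matrix.vecMulVec_apply, dotProduct]

lemma quad_ident {P : Matrix (Fin n) (Fin n) ℝ} (hP : Pᵀ = P) (m m' : Fin n → ℝ) :
    (m - m') ⬝ᵥ (P *ᵥ (m - m'))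
      = m ⬝ᵥ (P *ᵥ m) - m' ⬝ᵥ (P *ᵥ m') - 2 * ((P *ᵥ m') ⬝ᵥ (m - m')) := by
  have hc : m' ⬝ᵥ (P *ᵥ m) = m ⬝ᵥ (P *ᵥ m') := by
    rw [dot_sym hP, dotProduct_comm]
  have hc2 : (P *ᵥ m') ⬝ᵥ m = m ⬝ᵥ (P *ᵥ m') := dotProduct_comm _ _
  have hc3 : (P *ᵥ m') ⬝ᵥ m' = m' ⬝ᵥ (P *ᵥ m') := dotProduct_comm _ _
  rw [Matrix.mulVec_sub, dotProduct_sub, dotProduct_sub, sub_dotProduct,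
    sub_dotProduct]
  linarith

lemma sqrt_mono {Q R : Matrix (Fin n) (Fin n) ℝ} (hQ : Q.PosDef) (hR : R.PosDef)
    (h : ∀ x : Fin n → ℝ, 0 ≤ x ⬝ᵥ ((Q * Q - R * R) *ᵥ x)) : (Q - R).PosSemidef := by
  have hX : (Q - R).IsHermitian := hQ.1.sub hR.1
  refine hX.posSemidef_iff_eigenvalues_nonneg.mpr fun i => ?_
  set u : Fin n → ℝ := ⇑(hX.eigenvectorBasis i) with hu
  have hXu : (Q - R) *ᵥ u = hX.eigenvalues i • u := hX.mulVec_eigenvectorBasis i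
  have hune : u ≠ 0 := by
    have h1 : ‖hX.eigenvectorBasis i‖ = 1 := hX.eigenvectorBasis.orthonormal.1 i
    intro h0
    have h2 : hX.eigenvectorBasis i = 0 := by
      ext j; exact congrFun h0 j
    rw [h2, norm_zero] at h1; norm_num at h1
  have hXsym : (Q - R)ᵀ = Q - R := herm_transpose hX
  have key := h u
  have hQXR : Q * Q - R * R = Q * (Q - R) + (Q - R) * R := by noncomm_ring
  rw [hQXR, Matrix.add_mulVec, dotProduct_add] at key
  have e1 : u ⬝ᵥ ((Q * (Q - R)) *ᵥ u) = hX.eigenvalues i * (u ⬝ᵥ (Q *ᵥ u)) := by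
    rw [← Matrix.mulVec_mulVec, hXu, Matrix.mulVec_smul, dotProduct_smul]
    simp [dot_sym (herm_transpose hQ.1)]
  have e2 : u ⬝ᵥ (((Q - R) * R) *ᵥ u) = hX.eigenvalues i * (u ⬝ᵥ (R *ᵥ u)) := by
    rw [← Matrix.mulVec_mulVec, dot_sym hXsym, hXu, smul_dotProduct]
    simp [dot_sym (herm_transpose hR.1)]
  rw [e1, e2] at key
  have hQu : 0 < u ⬝ᵥ (Q *ᵥ u) := by
    have := hQ.dotProduct_mulVec_pos hune; simpa using this
  have hRu : 0 < u ⬝ᵥ (R *ᵥ u) := by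
    have := hR.dotProduct_mulVec_pos hune; simpa using this
  rw [Pi.zero_apply]
  nlinarith

lemma inv_quad_antitone {Q R : Matrix (Fin n) (Fin n) ℝ} (hQ : Q.PosDef) (hR : R.PosDef)
    (hle : (Q - R).PosSemidef) (d : Fin n → ℝ) :
    d ⬝ᵥ (Q⁻¹ *ᵥ d) ≤ d ⬝ᵥ (R⁻¹ *ᵥ d) := by
  have hQdet : IsUnit Q.det := isUnit_iff_ne_zero.mpr hQ.det_pos.ne'
  set u := Q⁻¹ *ᵥ d with hudef
  have hQu : Q *ᵥ u = d := by
    rw [hudef, Matrix.mulVec_mulVec, Matrix.mul_nonsing_inv _ hQdet, Matrix.one_mulVec]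
  have hE : (hR.posSemidef.sqrt).PosSemidef := hR.posSemidef.posSemidef_sqrt
  set E := hR.posSemidef.sqrt with hEdef
  have hEE : E * E = R := hR.posSemidef.sqrt_mul_self
  have hEpd : E.PosDef := posDef_sqrt hR
  have hEdet : IsUnit E.det := isUnit_iff_ne_zero.mpr hEpd.det_pos.ne'
  have hEsym : Eᵀ = E := herm_transpose hEpd.1
  have hEinvsym : (E⁻¹)ᵀ = E⁻¹ := by rw [Matrix.transpose_nonsing_inv, hEsym]
  set a := E *ᵥ u with hadef
  set b := E⁻¹ *ᵥ d with hbdef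
  have hab : a ⬝ᵥ b = u ⬝ᵥ d := by
    rw [hadef, hbdef, ← dot_sym hEsym, Matrix.mulVec_mulVec,
      Matrix.mul_nonsing_inv _ hEdet, Matrix.one_mulVec]
  have haa : a ⬝ᵥ a = u ⬝ᵥ (R *ᵥ u) := by
    rw [hadef, ← dot_sym hEsym, Matrix.mulVec_mulVec, hEE]
  have hbb : b ⬝ᵥ b = d ⬝ᵥ (R⁻¹ *ᵥ d) := by
    rw [hbdef, ← dot_sym hEinvsym, Matrix.mulVec_mulVec]
    have e3 : E⁻¹ * E⁻¹ = R⁻¹ := by rw [← hEE, Matrix.mul_inv_rev]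
    rw [e3]
  have cs : (a ⬝ᵥ b) ^ 2 ≤ (a ⬝ᵥ a) * (b ⬝ᵥ b) := by
    have := Finset.sum_mul_sq_le_sq_mul_sq Finset.univ a b
    simpa [dotProduct, sq] using this
  have hbb0 : 0 ≤ b ⬝ᵥ b := dot_self_nonneg b
  have huRu : u ⬝ᵥ (R *ᵥ u) ≤ u ⬝ᵥ d := by
    have h0 := hle.dotProduct_mulVec_nonneg u
    simp only [star_trivial, Matrix.sub_mulVec, dotProduct_sub] at h0
    rw [hQu] at h0
    linarith
  have hgoal : d ⬝ᵥ (Q⁻¹ *ᵥ d) = u ⬝ᵥ d := dotProduct_comm _ _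
  rw [hgoal, ← hbb]
  rcases le_or_gt (u ⬝ᵥ d) 0 with h | h
  · linarith
  · nlinarith [cs, huRu, hbb0, hab]

end LeonAux

theorem leon_dual_smoothness {n : ℕ} {S : Matrix (Fin n) (Fin n) ℝ}
    (hS : S.PosDef) {η : ℝ} (hη : 0 < η) (m m' : Fin n → ℝ) :
    η * (sqrtM (vecMulVec m m + S)).trace - η * (sqrtM (vecMulVec m' m' + S)).trace
      - (η • ((sqrtM (vecMulVec m' m' + S))⁻¹ *ᵥ m')) ⬝ᵥ (m - m')
    ≤ η / 2 * ((m - m') ⬝ᵥ ((sqrtM S)⁻¹ *ᵥ (m - m'))) := by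
  classical
  open LeonAux in
  have hApd : (vecMulVec m m + S).PosDef := Matrix.PosDef.posSemidef_add (posSemidef_vecMulVec m) hS
  have hA'pd : (vecMulVec m' m' + S).PosDef := Matrix.PosDef.posSemidef_add (posSemidef_vecMulVec m') hS
  rw [show sqrtM (vecMulVec m m + S) = hApd.posSemidef.sqrt from dif_pos hApd.posSemidef,
    show sqrtM (vecMulVec m' m' + S) = hA'pd.posSemidef.sqrt from dif_pos hA'pd.posSemidef,
    show sqrtM S = hS.posSemidef.sqrt from dif_pos hS.posSemidef]
  set Q := hA'pd.posSemidef.sqrt with hQdef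
  have hQQ : Q * Q = vecMulVec m' m' + S := hA'pd.posSemidef.sqrt_mul_self
  have hQpd : Q.PosDef := posDef_sqrt hA'pd
  have hQdet : IsUnit Q.det := isUnit_iff_ne_zero.mpr hQpd.det_pos.ne'
  have hQsym : Qᵀ = Q := herm_transpose hQpd.1
  have hPsym : (Q⁻¹)ᵀ = Q⁻¹ := by rw [Matrix.transpose_nonsing_inv, hQsym]
  set R0 := hS.posSemidef.sqrt with hR0def
  have hRR0 : R0 * R0 = S := hS.posSemidef.sqrt_mul_self
  have hR0pd : R0.PosDef := posDef_sqrt hS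
  -- AM-GM step
  have step1 := amgm hApd hQpd
  have step2 : ((vecMulVec m' m' + S) * Q⁻¹).trace = Q.trace := by
    rw [show (vecMulVec m' m' + S) * Q⁻¹ = Q from mul_inv_sqrt hA'pd]
  -- trace splitting
  have hStr : Sᵀ = S := herm_transpose hS.1
  have split : ∀ v : Fin n → ℝ, ((vecMulVec v v + S) * Q⁻¹).trace
      = v ⬝ᵥ (Q⁻¹ *ᵥ v) + (S * Q⁻¹).trace := by
    intro v
    rw [Matrix.add_mul, Matrix.trace_add, trace_vecMulVec_mul v hPsym]
  have key : 2 * (hApd.posSemidef.sqrt).trace - 2 * Q.trace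
      ≤ m ⬝ᵥ (Q⁻¹ *ᵥ m) - m' ⬝ᵥ (Q⁻¹ *ᵥ m') := by
    have h1 := split m
    have h2 := split m'
    rw [step2] at h2
    linarith
  -- quadratic identity
  have quad := quad_ident hPsym m m'
  -- monotonicity
  have hmono : (Q - R0).PosSemidef := by
    refine sqrt_mono hQpd hR0pd fun x => ?_
    have e : Q * Q - R0 * R0 = vecMulVec m' m' := by
      rw [hQQ, hRR0, add_sub_cancel_right]
    rw [e, dot_vecMulVec]
    exact sq_nonneg _
  have hinv := inv_quad_antitone hQpd hR0pd hmono (m - m')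
  rw [smul_dotProduct, smul_eq_mul]
  have h5 : (hApd.posSemidef.sqrt).trace - Q.trace - ((Q⁻¹ *ᵥ m') ⬝ᵥ (m - m'))
      ≤ ((m - m') ⬝ᵥ (R0⁻¹ *ᵥ (m - m'))) / 2 := by linarith [key, quad, hinv]
  calc η * (hApd.posSemidef.sqrt).trace - η * Q.trace
        - η * ((Q⁻¹ *ᵥ m') ⬝ᵥ (m - m'))
      = η * ((hApd.posSemidef.sqrt).trace - Q.trace - ((Q⁻¹ *ᵥ m') ⬝ᵥ (m - m'))) := by ring
    _ ≤ η * (((m - m') ⬝ᵥ (R0⁻¹ *ᵥ (m - m'))) / 2) := mul_le_mul_of_nonneg_left h5 hη.le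
    _ = η / 2 * ((m - m') ⬝ᵥ (R0⁻¹ *ᵥ (m - m'))) := by ring
end
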